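/- Let F be a free group on x_1,…,x_m and φ, ψ : F → G group homomorphisms such that ψ(x_i) = g_i φ(x_i) g_i⁻¹ for some g_i ∈ G. Then φ and ψ induce the same homomorphism F_{n+1}/F_{n+2} → G_{n+1}/G_{n+2} for every n ≥ 0, where subscripts denote lower central series. -/

import Mathlib

open Subgroup
open scoped commutatorElement

/-- Three subgroups lemma, "modulo N" form. -/
theorem comm_comm_le_of_rotate {G : Type*} [Group G] {H₁ H₂ H₃ N : Subgroup G} [N.Normal]
    (h1 : ⁅⁅H₂, H₃⁆, H₁⁆ ≤ N) (h2 : ⁅⁅H₃, H₁⁆, H₂⁆ ≤ N) : ⁅⁅H₁, H₂⁆, H₃⁆ ≤ N := by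
  let π := QuotientGroup.mk' N
  have key : ∀ K₁ K₂ K₃ : Subgroup G,
      (⁅⁅K₁, K₂⁆, K₃⁆ ≤ N ↔ ⁅⁅map π K₁, map π K₂⁆, map π K₃⁆ = ⊥) := by
    intro K₁ K₂ K₃
    rw [← map_commutator, ← map_commutator, Subgroup.map_eq_bot_iff, QuotientGroup.ker_mk']
  rw [key]
  exact commutator_commutator_eq_bot_of_rotate ((key _ _ _).mp h1) ((key _ _ _).mp h2)

theorem lcs_comm_le {G : Type*} [Group G] (m : ℕ) : ∀ n : ℕ,
    ⁅(⊤ : Subgroup G).lowerCentralSeries n, (⊤ : Subgroup G).lowerCentralSeries m⁆ ≤ (⊤ : Subgroup G).lowerCentralSeries (n + m + 1) := by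
  induction m with
  | zero => intro n; exact le_of_eq rfl
  | succ m ih =>
    intro n
    have e : (⊤ : Subgroup G).lowerCentralSeries (m + 1) = ⁅(⊤ : Subgroup G).lowerCentralSeries m, (⊤ : Subgroup G)⁆ := rfl
    rw [e, commutator_comm]
    apply comm_comm_le_of_rotate
    · rw [commutator_comm (⊤ : Subgroup G)]
      have e2 : ⁅(⊤ : Subgroup G).lowerCentralSeries n, (⊤ : Subgroup G)⁆ = (⊤ : Subgroup G).lowerCentralSeries (n + 1) := rfl
      rw [e2]
      have := ih (n + 1)
      convert this using 2
      omega
    · refine le_trans (commutator_mono (ih n) le_top) ?_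
      have e3 : ⁅(⊤ : Subgroup G).lowerCentralSeries (n + m + 1), (⊤ : Subgroup G)⁆
          = (⊤ : Subgroup G).lowerCentralSeries (n + m + 2) := rfl
      rw [e3]
      apply (⊤ : Subgroup G).lowerCentralSeries_antitone
      omega

theorem key_calc {Q : Type*} [Group Q] (a A b B : Q)
    (hab : Commute a b) (haA : Commute a A) (haB : Commute a B)
    (hAb : Commute A b) (hbc : Commute b (A * B * A⁻¹ * B⁻¹)) :
    (a * A) * (b * B) * (a * A)⁻¹ * (b * B)⁻¹ = A * B * A⁻¹ * B⁻¹ := by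
  have h1 : Commute a (A * b * B * A⁻¹) :=
    (((haA.mul_right hab).mul_right haB).mul_right haA.inv_right)
  calc (a * A) * (b * B) * (a * A)⁻¹ * (b * B)⁻¹
      = a * (A * b * B * A⁻¹) * a⁻¹ * (B⁻¹ * b⁻¹) := by group
    _ = (A * b) * B * A⁻¹ * (B⁻¹ * b⁻¹) := by rw [h1.eq]; group
    _ = b * (A * B * A⁻¹ * B⁻¹) * b⁻¹ := by rw [hAb.eq]; group
    _ = A * B * A⁻¹ * B⁻¹ := by rw [hbc.eq]; group

section helpers

variable {F G : Type*} [Group F] [Group G] (φ ψ : F →* G) (N : Subgroup G) [N.Normal]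

theorem step_mul {x y : F} (hx : ψ x * (φ x)⁻¹ ∈ N) (hy : ψ y * (φ y)⁻¹ ∈ N) :
    ψ (x * y) * (φ (x * y))⁻¹ ∈ N := by
  have e : ψ (x * y) * (φ (x * y))⁻¹
      = ψ x * (ψ y * (φ y)⁻¹) * (ψ x)⁻¹ * (ψ x * (φ x)⁻¹) := by
    rw [map_mul, map_mul]; group
  rw [e]
  exact mul_mem ((‹N.Normal›).conj_mem _ hy _) hx

theorem step_inv {x : F} (hx : ψ x * (φ x)⁻¹ ∈ N) :
    ψ x⁻¹ * (φ x⁻¹)⁻¹ ∈ N := by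
  have e : ψ x⁻¹ * (φ x⁻¹)⁻¹ = (ψ x)⁻¹ * (ψ x * (φ x)⁻¹)⁻¹ * ((ψ x)⁻¹)⁻¹ := by
    rw [map_inv, map_inv]; group
  rw [e]
  exact (‹N.Normal›).conj_mem _ (inv_mem hx) _

end helpers

theorem base_case {m : ℕ} {G : Type*} [Group G]
    (φ ψ : FreeGroup (Fin m) →* G) (g : Fin m → G)
    (h : ∀ i : Fin m, ψ (FreeGroup.of i) = g i * φ (FreeGroup.of i) * (g i)⁻¹)
    (x : FreeGroup (Fin m)) : ψ x * (φ x)⁻¹ ∈ (⊤ : Subgroup G).lowerCentralSeries 1 := by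
  refine FreeGroup.induction_on
    (C := fun x => ψ x * (φ x)⁻¹ ∈ (⊤ : Subgroup G).lowerCentralSeries 1) x ?_ ?_ ?_ ?_
  · simpa using one_mem ((⊤ : Subgroup G).lowerCentralSeries 1)
  · intro i
    show ψ (FreeGroup.of i) * (φ (FreeGroup.of i))⁻¹ ∈ (⊤ : Subgroup G).lowerCentralSeries 1
    have e : ψ (FreeGroup.of i) * (φ (FreeGroup.of i))⁻¹ = ⁅g i, φ (FreeGroup.of i)⁆ := by
      rw [h i, commutatorElement_def]
    rw [e]
    exact commutator_mem_commutator (mem_top _) (mem_top _)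
  · intro i hi
    exact step_inv φ ψ _ hi
  · intro x y hx hy
    exact step_mul φ ψ _ hx hy

/-- Let `F` be the free group on `x_1, …, x_m` and `φ, ψ : F → G` homomorphisms with
`ψ(x_i) = g_i φ(x_i) g_i⁻¹`.  Then `φ` and `ψ` induce the same homomorphism
`F_{n+1}/F_{n+2} → G_{n+1}/G_{n+2}` for every `n ≥ 0`: for `x ∈ F_{n+1}` (that is,
`x ∈ lowerCentralSeries F n`), `ψ x` and `φ x` agree modulo
`G_{n+2} = lowerCentralSeries G (n+1)`. -/
theorem conjugate_meridian_maps_induce_same_hom {m : ℕ} {G : Type*} [Group G]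
    (φ ψ : FreeGroup (Fin m) →* G) (g : Fin m → G)
    (h : ∀ i : Fin m, ψ (FreeGroup.of i) = g i * φ (FreeGroup.of i) * (g i)⁻¹)
    (n : ℕ) (x : FreeGroup (Fin m)) (hx : x ∈ (⊤ : Subgroup (FreeGroup (Fin m))).lowerCentralSeries n) :
    ψ x * (φ x)⁻¹ ∈ (⊤ : Subgroup G).lowerCentralSeries (n + 1) := by
  induction n generalizing x with
  | zero => exact base_case φ ψ g h x
  | succ n ih =>
    rw [Subgroup.lowerCentralSeries_succ] at hx
    refine Subgroup.closure_induction
      (p := fun y _ => ψ y * (φ y)⁻¹ ∈ (⊤ : Subgroup G).lowerCentralSeries (n + 1 + 1)) ?_ ?_ ?_ ?_ hx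
    · rintro _ ⟨p, hp, q, -, rfl⟩
      set Q := G ⧸ (⊤ : Subgroup G).lowerCentralSeries (n + 2) with hQ
      have hdiv : ∀ u v : G, u * v⁻¹ ∈ (⊤ : Subgroup G).lowerCentralSeries (n + 2) ↔ ((u : Q) = (v : Q)) := by
        intro u v
        rw [QuotientGroup.eq_iff_div_mem, div_eq_mul_inv]
      rw [show (n + 1 + 1) = n + 2 from rfl, hdiv]
      have com : ∀ u v : G, ⁅u, v⁆ ∈ (⊤ : Subgroup G).lowerCentralSeries (n + 2) →
          Commute ((u : Q)) ((v : Q)) := by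
        intro u v huv
        have h1 : ((⁅u, v⁆ : G) : Q) = 1 := (QuotientGroup.eq_one_iff _).mpr huv
        rw [commutatorElement_def] at h1
        apply commutatorElement_eq_one_iff_commute.mp
        rw [commutatorElement_def]
        simpa only [QuotientGroup.mk_mul, QuotientGroup.mk_inv] using h1
      set a := ψ p * (φ p)⁻¹ with ha_def
      set b := ψ q * (φ q)⁻¹ with hb_def
      set A := φ p with hA_def
      set B := φ q with hB_def
      have ha : a ∈ (⊤ : Subgroup G).lowerCentralSeries (n + 1) := ih p hp
      have hb : b ∈ (⊤ : Subgroup G).lowerCentralSeries 1 := base_case φ ψ g h q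
      have hA : A ∈ (⊤ : Subgroup G).lowerCentralSeries n := lowerCentralSeries.map φ n ⟨p, hp, rfl⟩
      have hAB : ⁅A, B⁆ ∈ (⊤ : Subgroup G).lowerCentralSeries (n + 1) :=
        commutator_mem_commutator hA (mem_top B)
      have c_ab : ⁅a, b⁆ ∈ (⊤ : Subgroup G).lowerCentralSeries (n + 2) :=
        commutator_mem_commutator ha (mem_top b)
      have c_aA : ⁅a, A⁆ ∈ (⊤ : Subgroup G).lowerCentralSeries (n + 2) :=
        commutator_mem_commutator ha (mem_top A)
      have c_aB : ⁅a, B⁆ ∈ (⊤ : Subgroup G).lowerCentralSeries (n + 2) :=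
        commutator_mem_commutator ha (mem_top B)
      have c_Ab : ⁅A, b⁆ ∈ (⊤ : Subgroup G).lowerCentralSeries (n + 2) :=
        lcs_comm_le 1 n (commutator_mem_commutator hA hb)
      have c_bc : ⁅b, ⁅A, B⁆⁆ ∈ (⊤ : Subgroup G).lowerCentralSeries (n + 2) := by
        refine (⊤ : Subgroup G).lowerCentralSeries_antitone (show n + 2 ≤ 1 + (n + 1) + 1 by omega) ?_
        exact lcs_comm_le (n + 1) 1 (commutator_mem_commutator hb hAB)
      have e1 : ψ (p * q * p⁻¹ * q⁻¹) = (a * A) * (b * B) * (a * A)⁻¹ * (b * B)⁻¹ := by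
        have h1 : a * A = ψ p := inv_mul_cancel_right _ _
        have h2 : b * B = ψ q := inv_mul_cancel_right _ _
        rw [h1, h2]
        simp only [map_mul, map_inv]
      have e2 : φ (p * q * p⁻¹ * q⁻¹) = A * B * A⁻¹ * B⁻¹ := by
        simp only [map_mul, map_inv]; rfl
      rw [commutatorElement_def, e1, e2]
      have hbc : Commute ((b : Q)) ((A : Q) * (B : Q) * (A : Q)⁻¹ * (B : Q)⁻¹) := by
        have h1 := com b (A * B * A⁻¹ * B⁻¹) c_bc
        simpa only [QuotientGroup.mk_mul, QuotientGroup.mk_inv] using h1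
      have goal : ((a : Q) * A) * ((b : Q) * B) * ((a : Q) * A)⁻¹ * ((b : Q) * B)⁻¹
          = (A : Q) * B * (A : Q)⁻¹ * (B : Q)⁻¹ :=
        key_calc _ _ _ _ (com a b c_ab) (com a A c_aA) (com a B c_aB) (com A b c_Ab) hbc
      simpa only [QuotientGroup.mk_mul, QuotientGroup.mk_inv] using goal
    · simpa using one_mem ((⊤ : Subgroup G).lowerCentralSeries (n + 1 + 1))
    · intro x y _ _ hx hy
      exact step_mul φ ψ _ hx hy
    · intro x _ hx
      exact step_inv φ ψ _ hx
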